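/- Let n ≥ 5. There is no digraph X on n vertices whose Hermitian adjacency matrix H(X) has characteristic polynomial (t + (n−1))·(t − 1)^{n−1}; that is, no digraph of order n ≥ 5 has H-spectrum {−(n−1), 1^{(n−1)}}. -/

import Mathlib

open Matrix Complex Polynomial

/-- Hermitian adjacency matrix of a digraph given by its arc relation `E`. -/
def hermAdj {V : Type*} (E : V → V → Prop) [DecidableRel E] : Matrix V V ℂ :=
  fun u v =>
    if E u v ∧ E v u then 1
    else if E u v then Complex.I
    else if E v u then -Complex.I
    else 0

lemma core {n : ℕ} (hn : 5 ≤ n) (A : Matrix (Fin n) (Fin n) ℂ)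
    (hdiag : ∀ u, A u u = -1)
    (hconj : ∀ u v, A v u = (starRingEnd ℂ) (A u v))
    (hent : ∀ u v, u ≠ v → A u v = 0 ∨ A u v = 1 ∨ A u v = Complex.I ∨ A u v = -Complex.I)
    (hA2 : ∀ u v, ∑ w, A u w * A w v = -(n : ℂ) * A u v) : False := by
  -- every entry has normSq = 1
  have habs : ∀ u w, Complex.normSq (A u w) = 1 := by
    intro u w
    have hle : ∀ w', Complex.normSq (A u w') ≤ 1 := by
      intro w'
      rcases eq_or_ne u w' with h | h
      · subst h; rw [hdiag]; simp [Complex.normSq]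
      · rcases hent u w' h with h' | h' | h' | h' <;> rw [h'] <;> simp [Complex.normSq]
    have hsumC : (∑ w', ((Complex.normSq (A u w') : ℂ))) = (n : ℂ) := by
      have := hA2 u u
      rw [hdiag] at this
      calc (∑ w', ((Complex.normSq (A u w') : ℂ))) = ∑ w', A u w' * A w' u := by
            refine Finset.sum_congr rfl fun w' _ => ?_
            rw [hconj u w', Complex.mul_conj]
          _ = (n : ℂ) := by rw [this]; ring
    have hsumR : (∑ w', Complex.normSq (A u w')) = (n : ℝ) := by
      have := congrArg Complex.re hsumC
      simpa using this
    have hz : ∀ w' ∈ Finset.univ, (0:ℝ) ≤ 1 - Complex.normSq (A u w') :=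
      fun w' _ => by linarith [hle w']
    have hzero : ∑ w' : Fin n, (1 - Complex.normSq (A u w')) = 0 := by
      rw [Finset.sum_sub_distrib, hsumR]; simp
    have := (Finset.sum_eq_zero_iff_of_nonneg hz).mp hzero w (Finset.mem_univ w)
    linarith
  -- equality case: A u w * A w v = -(A u v) for u ≠ v
  have key : ∀ u v w, u ≠ v → A u w * A w v = -(A u v) := by
    intro u v w huv
    set a := A u v with ha
    have hna : Complex.normSq a = 1 := habs u v
    have habs2 : ∀ w', ‖A u w' * A w' v * (starRingEnd ℂ) a‖ = 1 := by
      intro w'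
      rw [norm_mul, norm_mul, Complex.norm_conj]
      rw [Complex.norm_def, Complex.norm_def, Complex.norm_def,
        habs u w', habs w' v, hna, Real.sqrt_one]
      ring
    have hsum : (∑ w', A u w' * A w' v * (starRingEnd ℂ) a) = -(n : ℂ) := by
      rw [← Finset.sum_mul, hA2 u v, ← ha, mul_assoc, Complex.mul_conj, hna]
      simp
    have hsumre : (∑ w', ((A u w' * A w' v * (starRingEnd ℂ) a).re + 1)) = 0 := by
      rw [Finset.sum_add_distrib, ← Complex.re_sum, hsum]
      simp
    have hz : ∀ w' ∈ Finset.univ, (0:ℝ) ≤ (A u w' * A w' v * (starRingEnd ℂ) a).re + 1 := by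
      intro w' _
      have := Complex.abs_re_le_norm (A u w' * A w' v * (starRingEnd ℂ) a)
      rw [habs2 w'] at this
      have := abs_le.mp this
      linarith [this.1]
    have heach := (Finset.sum_eq_zero_iff_of_nonneg hz).mp hsumre w (Finset.mem_univ w)
    -- so (z * conj a).re = -1 and abs = 1 ⇒ z * conj a = -1
    set z := A u w * A w v * (starRingEnd ℂ) a with hzdef
    have hre : z.re = -1 := by linarith
    have habz : ‖z‖ = 1 := habs2 w
    have hns : Complex.normSq z = 1 := by
      have := Complex.sq_norm z
      rw [habz] at this
      nlinarith
    have him : z.im = 0 := by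
      have h4 : z.re * z.re + z.im * z.im = 1 := by
        rw [← Complex.normSq_apply]; exact hns
      nlinarith [hre]
    have hzneg : z = -1 := by
      apply Complex.ext <;> simp [hre, him]
    have : A u w * A w v * ((starRingEnd ℂ) a * a) = -1 * a := by
      rw [← mul_assoc, ← hzdef, hzneg]
    rw [mul_comm ((starRingEnd ℂ) a) a, Complex.mul_conj, hna] at this
    simpa using this
  -- injective map into a 4-element set
  have h0 : 0 < n := by omega
  let o : Fin n := ⟨0, h0⟩
  have hinj : Function.Injective (fun u => A o u) := by
    intro u v h
    by_contra huv
    simp only at h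
    have h1 : A u v = -(A u o * A o v) := by
      have := key u v o huv
      rw [this]; ring
    have h2 : A u o = (starRingEnd ℂ) (A o u) := hconj o u
    have h3 : A u v = -1 := by
      rw [h1, h2, h, mul_comm, Complex.mul_conj, habs o v]; simp
    rcases hent u v huv with h' | h' | h' | h' <;> rw [h'] at h3
    · exact absurd h3 (by norm_num)
    · exact absurd h3 (by norm_num)
    · have := congrArg Complex.re h3; simp at this
    · have := congrArg Complex.re h3; simp at this
  have hmem : ∀ u : Fin n, A o u ∈ ({-1, 1, Complex.I, -Complex.I} : Finset ℂ) := by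
    intro u
    rcases eq_or_ne o u with h | h
    · subst h; rw [hdiag]; simp
    · rcases hent o u h with h' | h' | h' | h'
      · exfalso; have := habs o u; rw [h'] at this; simp at this
      · rw [h']; simp
      · rw [h']; simp
      · rw [h']; simp
  have hcard : n ≤ ({-1, 1, Complex.I, -Complex.I} : Finset ℂ).card := by
    have := Finset.card_le_card_of_injOn (s := (Finset.univ : Finset (Fin n)))
      (fun u => A o u) (fun u _ => hmem u) (hinj.injOn)
    simpa using this
  have h4 : ({-1, 1, Complex.I, -Complex.I} : Finset ℂ).card ≤ 4 := by
    refine le_trans (Finset.card_insert_le _ _) ?_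
    refine le_trans (Nat.add_le_add_right (Finset.card_insert_le _ _) 1) ?_
    refine le_trans (Nat.add_le_add_right (Nat.add_le_add_right (Finset.card_insert_le _ _) 1) 1) ?_
    simp
  omega

lemma eval_charpoly' {n : ℕ} (M : Matrix (Fin n) (Fin n) ℂ) (μ : ℂ) :
    (M.charpoly).eval μ = (Matrix.scalar (Fin n) μ - M).det := by
  exact Matrix.eval_charpoly M μ

lemma quad {n : ℕ} (hn : 5 ≤ n) (H : Matrix (Fin n) (Fin n) ℂ) (hH : H.IsHermitian)
    (hchar : H.charpoly =
      (Polynomial.X + Polynomial.C ((n : ℂ) - 1)) *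
        (Polynomial.X - Polynomial.C 1) ^ (n - 1)) :
    H * H = ((n : ℂ) - 1) • (1 : Matrix (Fin n) (Fin n) ℂ) - ((n : ℂ) - 2) • H := by
  have hroot : ∀ i, (((hH.eigenvalues i : ℂ)) + ((n : ℂ) - 1)) * ((hH.eigenvalues i : ℂ) - 1) = 0 := by
    intro i
    set μ : ℂ := (hH.eigenvalues i : ℂ) with hμ
    have hv := hH.mulVec_eigenvectorBasis i
    have hvne : (⇑(hH.eigenvectorBasis i) : Fin n → ℂ) ≠ 0 := by
      intro h
      exact hH.eigenvectorBasis.orthonormal.ne_zero i (by ext j; exact congrFun h j)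
    have hker : (Matrix.scalar (Fin n) μ - H) *ᵥ ⇑(hH.eigenvectorBasis i) = 0 := by
      rw [Matrix.sub_mulVec, hv]
      ext j
      simp [Matrix.scalar, Matrix.mulVec_diagonal, hμ, Complex.real_smul,
        Pi.algebraMap_apply, Algebra.algebraMap_self_apply]
    have hdet : (Matrix.scalar (Fin n) μ - H).det = 0 := by
      rw [← Matrix.exists_mulVec_eq_zero_iff]
      exact ⟨_, hvne, hker⟩
    have heval : (H.charpoly).eval μ = 0 := by rw [eval_charpoly', hdet]
    rw [hchar] at heval
    simp only [eval_mul, eval_pow, eval_add, eval_sub, eval_X, eval_C] at heval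
    rcases mul_eq_zero.mp heval with h | h
    · rw [h]; ring
    · have : μ - 1 = 0 := pow_eq_zero_iff (by omega) |>.mp h
      rw [this]; ring
  -- spectral theorem
  have hspec := hH.spectral_theorem
  set U : Matrix (Fin n) (Fin n) ℂ := (hH.eigenvectorUnitary : Matrix (Fin n) (Fin n) ℂ) with hU
  set D : Matrix (Fin n) (Fin n) ℂ := Matrix.diagonal (RCLike.ofReal ∘ hH.eigenvalues) with hD
  have hUU : U * star U = 1 := (Matrix.mem_unitaryGroup_iff).mp hH.eigenvectorUnitary.2
  have hUU' : star U * U = 1 := (Matrix.mem_unitaryGroup_iff').mp hH.eigenvectorUnitary.2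
  have hDq : D * D + ((n : ℂ) - 2) • D = ((n : ℂ) - 1) • (1 : Matrix (Fin n) (Fin n) ℂ) := by
    rw [hD, Matrix.diagonal_mul_diagonal, ← Matrix.diagonal_one, ← Matrix.diagonal_smul,
      ← Matrix.diagonal_smul, Matrix.diagonal_add]
    refine congrArg Matrix.diagonal (funext fun i => ?_)
    simp only [Pi.add_apply, Pi.mul_apply, Pi.smul_apply, Function.comp_apply, smul_eq_mul,
      Pi.one_apply, RCLike.ofReal_alg, Complex.real_smul, Complex.ofReal_one, mul_one]
    linear_combination hroot i
  have hsq : (U * D * star U) * (U * D * star U) = U * (D * D) * star U := by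
    simp only [Matrix.mul_assoc]
    rw [← Matrix.mul_assoc (star U) U, hUU', Matrix.one_mul]
  have hmain : H * H + ((n : ℂ) - 2) • H = ((n : ℂ) - 1) • (1 : Matrix (Fin n) (Fin n) ℂ) := by
    conv_lhs => rw [hspec, Unitary.conjStarAlgAut_apply, ← hU]
    rw [hsq]
    have hexp : U * (D * D) * star U + ((n : ℂ) - 2) • (U * D * star U)
        = U * (D * D + ((n : ℂ) - 2) • D) * star U := by
      rw [Matrix.mul_add, Matrix.add_mul, Matrix.mul_smul, Matrix.smul_mul]
    rw [hexp, hDq, Matrix.mul_smul, Matrix.smul_mul, Matrix.mul_one, hUU]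
  rw [← hmain]
  abel
section Glue
variable {n : ℕ} (E : Fin n → Fin n → Prop) [DecidableRel E]

lemma hermAdj_diag (hirr : ∀ v, ¬ E v v) (u : Fin n) : hermAdj E u u = 0 := by
  simp [hermAdj, hirr u]

lemma hermAdj_conj (u v : Fin n) :
    hermAdj E v u = (starRingEnd ℂ) (hermAdj E u v) := by
  unfold hermAdj
  by_cases h1 : E u v <;> by_cases h2 : E v u <;>
    simp [h1, h2, Complex.conj_I]

lemma hermAdj_cases (u v : Fin n) :
    hermAdj E u v = 0 ∨ hermAdj E u v = 1 ∨ hermAdj E u v = Complex.I ∨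
      hermAdj E u v = -Complex.I := by
  unfold hermAdj
  by_cases h1 : E u v <;> by_cases h2 : E v u <;> simp [h1, h2]

lemma hermAdj_isHermitian : (hermAdj E).IsHermitian := by
  ext i j
  rw [Matrix.conjTranspose_apply, hermAdj_conj E j i]
  rfl

end Glue

/-- For `n ≥ 5`, no digraph on `n` vertices has `H`-spectrum `{-(n-1), 1^(n-1)}`,
i.e. no Hermitian adjacency matrix has characteristic polynomial
`(t + (n-1)) * (t - 1)^(n-1)`. -/
theorem stmt5 {n : ℕ} (hn : 5 ≤ n) (E : Fin n → Fin n → Prop) [DecidableRel E]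
    (hirr : ∀ v, ¬ E v v) :
    (hermAdj E).charpoly ≠
      (Polynomial.X + Polynomial.C ((n : ℂ) - 1)) *
        (Polynomial.X - Polynomial.C 1) ^ (n - 1) := by
  intro hchar
  set H : Matrix (Fin n) (Fin n) ℂ := hermAdj E with hHdef
  have hH : H.IsHermitian := hermAdj_isHermitian E
  have hq := quad hn H hH hchar
  set A : Matrix (Fin n) (Fin n) ℂ := H - 1 with hAdef
  have hA2mat : A * A = (-(n : ℂ)) • A := by
    have h1 : A * A = H * H - H - H + 1 := by rw [hAdef]; noncomm_ring
    rw [h1, hq, hAdef]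
    module
  refine core hn A (fun u => ?_) (fun u v => ?_) (fun u v huv => ?_) (fun u v => ?_)
  · rw [hAdef, Matrix.sub_apply, hHdef, hermAdj_diag E hirr u, Matrix.one_apply_eq]
    ring
  · rw [hAdef, Matrix.sub_apply, Matrix.sub_apply, hHdef, hermAdj_conj E u v, map_sub]
    congr 1
    rcases eq_or_ne u v with h | h
    · subst h; simp
    · rw [Matrix.one_apply_ne h, Matrix.one_apply_ne (Ne.symm h)]; simp
  · rw [hAdef, Matrix.sub_apply, Matrix.one_apply_ne huv, sub_zero, hHdef]
    exact hermAdj_cases E u v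
  · have := congrFun (congrFun hA2mat u) v
    rw [Matrix.mul_apply] at this
    rw [this]
    simp [Matrix.smul_apply]
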